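/- Let G be a simple graph on Fin n and let Ed = { (i,j) : i < j and i, j adjacent in G } be its edge set. Define the simple graph H on the vertex set Fin n ⊕ Ed ⊕ Fin n ⊕ Fin n (vertices L_i for i : Fin n, L_e for e ∈ Ed, A¹_i and A²_i for i : Fin n) whose edges are exactly: {L_e, L_i} and {L_e, L_j} for each e = (i,j) ∈ Ed; {L_e, L_f} for each pair e ≠ f in Ed with the same second coordinate; {A¹_i, L_i} and {A¹_i, A²_i} for each i : Fin n. Then for every natural number k: G has a vertex cover of cardinality at most k if and only if H has a dominating set of cardinality at most k + n. -/

import Mathlib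

/-- The vertex set of the reduction graph: vertex frames `L_i`, edge frames `L_e` for
edges `e = (i,j)` with `i < j`, and auxiliary frames `A¹_i` and `A²_i`. -/
def Vtx17 (n : ℕ) (G : SimpleGraph (Fin n)) :=
  Fin n ⊕ ({p : Fin n × Fin n // p.1 < p.2 ∧ G.Adj p.1 p.2} ⊕ (Fin n ⊕ Fin n))

/-- Base relation generating the edges of the reduction graph: `L_e ~ L_i` and `L_e ~ L_j`
for `e = (i,j)`; `L_e ~ L_f` for distinct edges with the same second (larger) coordinate;
`A¹_i ~ L_i` and `A¹_i ~ A²_i`. -/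
def rel17 {n : ℕ} (G : SimpleGraph (Fin n)) : Vtx17 n G → Vtx17 n G → Prop
  | Sum.inr (Sum.inl e), Sum.inl i => e.val.1 = i ∨ e.val.2 = i
  | Sum.inr (Sum.inl e), Sum.inr (Sum.inl f) => e.val.2 = f.val.2
  | Sum.inr (Sum.inr (Sum.inl i)), Sum.inl i' => i = i'
  | Sum.inr (Sum.inr (Sum.inl i)), Sum.inr (Sum.inr (Sum.inr i')) => i = i'
  | _, _ => False

/-- The reduction graph `H`. -/
def H17 {n : ℕ} (G : SimpleGraph (Fin n)) : SimpleGraph (Vtx17 n G) :=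
  SimpleGraph.fromRel (rel17 G)

/-- A set of vertices is a dominating set: every vertex is in it or adjacent to a member. -/
def IsDomSet {V : Type*} (G : SimpleGraph V) (D : Set V) : Prop :=
  ∀ v, v ∈ D ∨ ∃ u ∈ D, G.Adj u v

instance {n : ℕ} {G : SimpleGraph (Fin n)} : DecidableEq (Vtx17 n G) := by
  unfold Vtx17; infer_instance

/-- Whether a vertex of the reduction graph is a vertex frame or an edge frame. -/
def isL17 {n : ℕ} {G : SimpleGraph (Fin n)} : Vtx17 n G → Bool
  | Sum.inl _ => true
  | Sum.inr (Sum.inl _) => true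
  | _ => false

/-- Project a vertex of the reduction graph to a vertex of `G`:
vertex frames go to their vertex, edge frames to the larger endpoint. -/
def gmap17 {n : ℕ} {G : SimpleGraph (Fin n)} : Vtx17 n G → Fin n
  | Sum.inl i => i
  | Sum.inr (Sum.inl e) => e.val.2
  | Sum.inr (Sum.inr (Sum.inl i)) => i
  | Sum.inr (Sum.inr (Sum.inr i)) => i

/-- `G` has a vertex cover of cardinality at most `k` iff the reduction graph `H` has a
dominating set of cardinality at most `k + n`. -/
theorem vertex_cover_iff_domset (n : ℕ) (G : SimpleGraph (Fin n)) (k : ℕ) :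
    (∃ C : Finset (Fin n), C.card ≤ k ∧ ∀ i j, G.Adj i j → i ∈ C ∨ j ∈ C) ↔
      (∃ D : Finset (Vtx17 n G), D.card ≤ k + n ∧ IsDomSet (H17 G) ↑D) := by
  classical
  constructor
  · rintro ⟨C, hC, hcov⟩
    refine ⟨C.image (Sum.inl : Fin n → Vtx17 n G) ∪
        Finset.univ.image (fun i : Fin n => (Sum.inr (Sum.inr (Sum.inl i)) : Vtx17 n G)),
        ?_, ?_⟩
    · calc _ ≤ (C.image (Sum.inl : Fin n → Vtx17 n G)).card +
              (Finset.univ.image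
                (fun i : Fin n => (Sum.inr (Sum.inr (Sum.inl i)) : Vtx17 n G))).card :=
            Finset.card_union_le _ _
        _ ≤ k + n := by
            gcongr
            · exact le_trans (Finset.card_image_le) hC
            · refine le_trans (Finset.card_image_le) ?_
              simp
    · intro v
      rcases v with i | e | i | i
      · -- L_i dominated by A¹_i
        right
        refine ⟨Sum.inr (Sum.inr (Sum.inl i)), Finset.mem_coe.mpr (Finset.mem_union_right _ (Finset.mem_image_of_mem _ (Finset.mem_univ i))), ?_⟩
        refine (SimpleGraph.fromRel_adj _ _ _).mpr ?_
        exact ⟨fun hc => Sum.inr_ne_inl hc, Or.inl rfl⟩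
      · -- L_e dominated by endpoint in the cover
        right
        obtain ⟨⟨i, j⟩, hij, hadj⟩ := e
        rcases hcov i j hadj with h | h
        · refine ⟨Sum.inl i, ?_, ?_⟩
          · simp only [Finset.coe_union, Set.mem_union, Finset.coe_image, Set.mem_image,
              Finset.mem_coe]
            exact Or.inl (Finset.mem_image_of_mem _ h)
          · refine (SimpleGraph.fromRel_adj _ _ _).mpr ?_
            exact ⟨fun hc => Sum.inl_ne_inr hc, Or.inr (Or.inl rfl)⟩
        · refine ⟨Sum.inl j, ?_, ?_⟩
          · simp only [Finset.coe_union, Set.mem_union, Finset.coe_image, Set.mem_image,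
              Finset.mem_coe]
            exact Or.inl (Finset.mem_image_of_mem _ h)
          · refine (SimpleGraph.fromRel_adj _ _ _).mpr ?_
            exact ⟨fun hc => Sum.inl_ne_inr hc, Or.inr (Or.inr rfl)⟩
      · left; exact Finset.mem_coe.mpr (Finset.mem_union_right _ (Finset.mem_image_of_mem _ (Finset.mem_univ i)))
      · right
        refine ⟨Sum.inr (Sum.inr (Sum.inl i)), Finset.mem_coe.mpr (Finset.mem_union_right _ (Finset.mem_image_of_mem _ (Finset.mem_univ i))), ?_⟩
        refine (SimpleGraph.fromRel_adj _ _ _).mpr ?_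
        refine ⟨fun hc => ?_, Or.inl rfl⟩
        injection hc with hc; injection hc with hc; injection hc
  · rintro ⟨D, hD, hdom⟩
    set DL := D.filter (fun v => isL17 v = true) with hDLdef
    set DA := D.filter (fun v => ¬ isL17 v = true) with hDAdef
    -- every A²_i forces A¹_i or A²_i in D
    have hAmem : ∀ i : Fin n,
        (Sum.inr (Sum.inr (Sum.inl i)) : Vtx17 n G) ∈ D ∨
        (Sum.inr (Sum.inr (Sum.inr i)) : Vtx17 n G) ∈ D := by
      intro i
      rcases hdom (Sum.inr (Sum.inr (Sum.inr i))) with h | ⟨u, hu, hadj⟩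
      · exact Or.inr h
      · left
        replace hadj := (SimpleGraph.fromRel_adj _ _ _).mp hadj
        obtain ⟨-, h⟩ := hadj
        rcases u with j | f | j | j
        · simp [rel17] at h
        · simp [rel17] at h
        · have : j = i := by simpa [rel17] using h
          subst this; exact hu
        · simp [rel17] at h
    have hn : n ≤ DA.card := by
      have := Finset.card_le_card_of_injOn
        (f := fun i : Fin n =>
          if (Sum.inr (Sum.inr (Sum.inl i)) : Vtx17 n G) ∈ D then
            (Sum.inr (Sum.inr (Sum.inl i)) : Vtx17 n G)
          else Sum.inr (Sum.inr (Sum.inr i)))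
        (s := Finset.univ) (t := DA) ?_ ?_
      · simpa using this
      · intro i _
        beta_reduce
        by_cases h : (Sum.inr (Sum.inr (Sum.inl i)) : Vtx17 n G) ∈ D
        · refine (congrArg (fun x => x ∈ DA) (if_pos h)).mpr ?_
          exact Finset.mem_filter.mpr ⟨h, by exact fun hc => Bool.noConfusion hc⟩
        · refine (congrArg (fun x => x ∈ DA) (if_neg h)).mpr ?_
          exact Finset.mem_filter.mpr ⟨(hAmem i).resolve_left h,
            by exact fun hc => Bool.noConfusion hc⟩
      · intro a _ b _ hab
        simp only at hab
        split_ifs at hab <;>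
          · have hg : ∀ x : Fin n, gmap17 (if (Sum.inr (Sum.inr (Sum.inl x)) : Vtx17 n G) ∈ D then
                (Sum.inr (Sum.inr (Sum.inl x)) : Vtx17 n G) else Sum.inr (Sum.inr (Sum.inr x))) = x := by
              intro x
              by_cases hx : (Sum.inr (Sum.inr (Sum.inl x)) : Vtx17 n G) ∈ D
              · exact (congrArg gmap17 (if_pos hx)).trans rfl
              · exact (congrArg gmap17 (if_neg hx)).trans rfl
            exact (hg a).symm.trans ((congrArg gmap17 hab).trans (hg b))
    have hsplit : DL.card + DA.card = D.card :=
      Finset.card_filter_add_card_filter_not (p := fun v => isL17 v = true)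
    have hDL : DL.card ≤ k := by omega
    refine ⟨DL.image gmap17, le_trans Finset.card_image_le hDL, ?_⟩
    have key : ∀ i j : Fin n, i < j → G.Adj i j →
        i ∈ DL.image gmap17 ∨ j ∈ DL.image gmap17 := by
      intro i j hij hadj
      set e : {p : Fin n × Fin n // p.1 < p.2 ∧ G.Adj p.1 p.2} := ⟨(i, j), hij, hadj⟩ with he
      have memC : ∀ u : Vtx17 n G, u ∈ D → isL17 u = true → gmap17 u ∈ DL.image gmap17 := by
        intro u hu hL
        exact Finset.mem_image_of_mem _ (Finset.mem_filter.mpr ⟨hu, hL⟩)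
      rcases hdom (Sum.inr (Sum.inl e)) with h | ⟨u, hu, huv⟩
      · right
        have := memC _ h rfl
        simpa [gmap17, he] using this
      · replace huv := (SimpleGraph.fromRel_adj _ _ _).mp huv
        obtain ⟨-, h⟩ := huv
        rcases u with i' | f | i' | i'
        · have h' : i = i' ∨ j = i' := by
            rcases h with h | h
            · simp [rel17] at h
            · simpa [rel17, he] using h
          have hmem := memC _ hu rfl
          rcases h' with h' | h'
          · left; simpa [gmap17, h'] using hmem
          · right; simpa [gmap17, h'] using hmem
        · have h' : f.val.2 = j := by
            rcases h with h | h
            · simpa [rel17, he] using h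
            · have : (j : Fin n) = f.val.2 := by simpa [rel17, he] using h
              exact this.symm
          have hmem := memC _ hu rfl
          right; simpa [gmap17, h'] using hmem
        · simp [rel17] at h
        · simp [rel17] at h
    intro i j hadj
    rcases lt_or_gt_of_ne hadj.ne with h | h
    · exact key i j h hadj
    · exact (key j i h hadj.symm).symm
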